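/- Let κ_0 < κ_1 < ⋯ < κ_n be infinite regular cardinals, let X be a T3 (regular Hausdorff) space, let p ∈ X, and suppose N(p,X) is cofinally equivalent to the coordinatewise product ∏_{i≤n} κ_i. Then for every infinite regular cardinal λ: there is an escape sequence at p of length λ if and only if there is an escape sequence at p of length λ consisting of regular open sets, if and only if λ ∈ {κ_0, …, κ_n}. -/

import Mathlib

universe u v w

open Cardinal Set

namespace EscapeAux

lemma mk_toType_eq (c : Cardinal.{u}) : #c.ord.ToType = c := by
  rw [Cardinal.mk_toType, Cardinal.card_ord]

lemma exists_bound {c : Cardinal.{u}} (hc : c.IsRegular) {ι : Type u}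
    (hι : #ι < c) (f : ι → c.ord.ToType) : ∃ b, ∀ i, f i ≤ b := by
  set e := Ordinal.ToType.mk (o := c.ord)
  have h1 : ∀ i, (e.symm (f i)).1 < c.ord := fun i => (e.symm (f i)).2
  have hs : (⨆ i, (e.symm (f i)).1) < c.ord :=
    Ordinal.iSup_lt_ord (by rwa [hc.cof_eq]) h1
  refine ⟨e ⟨_, hs⟩, fun i => ?_⟩
  have h2 : e.symm (f i) ≤ (⟨_, hs⟩ : Set.Iio c.ord) :=
    Ordinal.le_iSup (fun i => (e.symm (f i)).1) i
  have := e.monotone h2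
  rwa [e.apply_symm_apply] at this

lemma card_Iio_lt {c : Cardinal.{u}} (hc : c.IsRegular) (x : c.ord.ToType) :
    #(Set.Iio x) < c := by
  have h2 := @Ordinal.card_typein c.ord.ToType (· < ·) isWellOrder_lt x
  have h3 : #(Set.Iio x) = #{y // y < x} := rfl
  rw [h3, ← h2]
  exact Cardinal.lt_ord.1 (Ordinal.typein_lt_self x)

lemma card_Iic_lt {c : Cardinal.{u}} (hc : c.IsRegular) (x : c.ord.ToType) :
    #(Set.Iic x) < c := by
  rw [← Set.Iio_insert]
  refine lt_of_le_of_lt Cardinal.mk_insert_le ?_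
  exact Cardinal.add_lt_of_lt hc.aleph0_le (card_Iio_lt hc x)
    (lt_of_lt_of_le Cardinal.one_lt_aleph0 hc.aleph0_le)

lemma exists_not_le {c : Cardinal.{u}} (hc : c.IsRegular) {S : Set c.ord.ToType}
    (hS : c ≤ #S) (x : c.ord.ToType) : ∃ y ∈ S, ¬ y ≤ x := by
  by_contra h
  push_neg at h
  have hsub : S ⊆ Set.Iic x := fun y hy => h y hy
  exact absurd (hS.trans (Cardinal.mk_le_mk_of_subset hsub)) (not_le.2 (card_Iic_lt hc x))

lemma exists_big_fiber {ι A : Type u} {c : Cardinal.{u}} (hc : c.IsRegular)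
    (hι : c ≤ #ι) (hA : #A < c) (F : ι → A) : ∃ a, c ≤ #{x : ι | F x = a} := by
  by_contra h
  push_neg at h
  have he : #ι = Cardinal.sum fun a : A => #{x : ι | F x = a} := by
    rw [← Cardinal.mk_sigma]
    exact (Cardinal.mk_congr (Equiv.sigmaFiberEquiv F)).symm
  have hlt : #ι < c := by
    rw [he]
    exact Cardinal.sum_lt_of_isRegular hc hA fun a => h a
  exact absurd (hι.trans_lt hlt) (lt_irrefl c)

lemma prod_lt_of_isRegular {ι : Type u} [Fintype ι] {c : Cardinal.{u}}
    (hc : c.IsRegular) (f : ι → Cardinal.{u}) (hf : ∀ i, f i < c) :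
    Cardinal.prod f < c := by
  have hle : Cardinal.prod f ≤ (⨆ i, f i) ^ (Fintype.card ι : Cardinal.{u}) := by
    rw [show ((Fintype.card ι : ℕ) : Cardinal.{u}) = #ι from (Cardinal.mk_fintype ι).symm,
      ← Cardinal.prod_const']
    exact Cardinal.prod_le_prod _ _ fun i => le_ciSup (Cardinal.bddAbove_range _) i
  rcases lt_or_ge (⨆ i, f i) ℵ₀ with h | h
  · refine lt_of_le_of_lt hle (lt_of_lt_of_le ?_ hc.aleph0_le)
    rw [Cardinal.power_natCast]
    exact Cardinal.power_lt_aleph0 h (Cardinal.nat_lt_aleph0 _)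
  · have hne : Nonempty ι := by
      by_contra hemp
      rw [not_nonempty_iff] at hemp
      rw [ciSup_of_empty] at h
      exact absurd (lt_of_lt_of_le Cardinal.aleph0_pos h) (lt_irrefl _)
    have hsup : (⨆ i, f i) < c :=
      Cardinal.iSup_lt_of_isRegular hc
        (by rw [Cardinal.mk_fintype]; exact (Cardinal.nat_lt_aleph0 _).trans_le hc.aleph0_le) hf
    refine lt_of_le_of_lt hle ?_
    rw [Cardinal.power_natCast, Cardinal.power_nat_eq h Fintype.card_pos]
    exact hsup

lemma interior_closure_interior_closure {X : Type w} [TopologicalSpace X] (s : Set X) :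
    interior (closure (interior (closure s))) = interior (closure s) := by
  apply subset_antisymm
  · refine interior_mono ?_
    have : closure (interior (closure s)) ⊆ closure (closure s) := closure_mono interior_subset
    rwa [closure_closure] at this
  · exact interior_maximal subset_closure isOpen_interior

end EscapeAux

/-- Two preorders are *cofinally equivalent* if there is a preorder (given here by a
reflexive transitive relation `le` on `R`) such that both are order isomorphic to
cofinal subsets of it. -/
def CofEquiv (P : Type u) (Q : Type v) [Preorder P] [Preorder Q] : Prop :=
  ∃ (R : Type (max u v)) (le : R → R → Prop),
    Reflexive le ∧ Transitive le ∧
    ∃ (f : P → R) (g : Q → R),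
      Function.Injective f ∧ Function.Injective g ∧
      (∀ a b : P, a ≤ b ↔ le (f a) (f b)) ∧
      (∀ a b : Q, a ≤ b ↔ le (g a) (g b)) ∧
      (∀ r : R, ∃ a : P, le r (f a)) ∧
      (∀ r : R, ∃ b : Q, le r (g b))

/-- The neighborhood filter of `p`, i.e. all sets whose interior contains `p`,
as a preorder under containment `⊇`. -/
def Nbhds (X : Type w) [TopologicalSpace X] (p : X) := {U : Set X // U ∈ nhds p}

instance (X : Type w) [TopologicalSpace X] (p : X) : Preorder (Nbhds X p) where
  le U V := Subtype.val V ⊆ Subtype.val U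
  le_refl _ := subset_rfl
  le_trans _ _ _ h1 h2 := Set.Subset.trans h2 h1

/-- `U` is an escape sequence at `p`: a decreasing (w.r.t. the index order) sequence
of neighborhoods of `p` whose intersection is not a neighborhood of `p`. -/
def IsEscapeSeq {X : Type w} [TopologicalSpace X] (p : X) {ι : Type u} [Preorder ι]
    (U : ι → Set X) : Prop :=
  (∀ i, U i ∈ nhds p) ∧ (∀ i j : ι, i ≤ j → U j ⊆ U i) ∧ (⋂ i, U i) ∉ nhds p

/-- If `κ 0 < ⋯ < κ n` are infinite regular cardinals, `X` is `T₃`,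
and `N(p,X) ≡cf ∏_{i ≤ n} κ i`, then for every infinite regular cardinal `λ`:
there is an escape sequence at `p` of length `λ` iff there is one consisting of
regular open sets, iff `λ ∈ {κ 0, …, κ n}`. -/
theorem escape_spectrum_of_rectangular_base {X : Type u} [TopologicalSpace X]
    [T3Space X] (p : X) (n : ℕ) (κ : Fin (n + 1) → Cardinal.{u})
    (hreg : ∀ i, (κ i).IsRegular) (hmono : StrictMono κ)
    (heq : CofEquiv (Nbhds X p) (∀ i, (κ i).ord.ToType)) :
    ∀ lam : Cardinal.{u}, lam.IsRegular →
      ((∃ U : lam.ord.ToType → Set X, IsEscapeSeq p U) ↔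
        (∃ U : lam.ord.ToType → Set X,
          IsEscapeSeq p U ∧ ∀ i, U i = interior (closure (U i)))) ∧
      ((∃ U : lam.ord.ToType → Set X, IsEscapeSeq p U) ↔ ∃ i, κ i = lam) := by
  classical
  intro lam hlam
  obtain ⟨R, lr, -, htrans, f, g, -, -, hf, hg, hcofN, hcofP⟩ := heq
  have hne : ∀ j, Nonempty ((κ j).ord.ToType) := fun j =>
    Ordinal.nonempty_toType_iff.2 (fun h => (hreg j).pos.ne' (Cardinal.ord_eq_zero.1 h))
  choose UU hUU using fun d : Nbhds X p => hcofP (f d)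
  choose VV hVV using fun a : (∀ i, (κ i).ord.ToType) => hcofN (g a)
  have key1 : ∀ (d : Nbhds X p) (a : ∀ i0, (κ i0).ord.ToType),
      UU d ≤ a → (VV a).1 ⊆ d.1 := by
    intro d a hda
    have h1 : lr (f d) (g a) := htrans (hUU d) ((hg (UU d) a).1 hda)
    have h2 : lr (f d) (f (VV a)) := htrans h1 (hVV a)
    exact (hf d (VV a)).2 h2
  have key2 : ∀ (a : ∀ i0, (κ i0).ord.ToType) (d : Nbhds X p),
      d.1 ⊆ (VV a).1 → a ≤ UU d := by
    intro a d hsub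
    have h0 : (VV a) ≤ d := hsub
    have h1 : lr (g a) (f d) := htrans (hVV a) ((hf (VV a) d).1 h0)
    exact (hg a (UU d)).2 (htrans h1 (hUU d))
  -- Direction B : an escape sequence of regular length lam forces lam ∈ {κ i}
  have lemB : (∃ U : lam.ord.ToType → Set X, IsEscapeSeq p U) → ∃ i, κ i = lam := by
    rintro ⟨E, hEmem, hEmono, hEint⟩
    by_contra hno
    push_neg at hno
    have hA : #(∀ j : {j : Fin (n+1) // κ j < lam}, ((κ j.1).ord.ToType)) < lam := by
      haveI : Fintype {j : Fin (n+1) // κ j < lam} := Fintype.ofFinite _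
      calc #(∀ j : {j : Fin (n+1) // κ j < lam}, ((κ j.1).ord.ToType))
          = #(∀ x : ULift.{u} {j : Fin (n+1) // κ j < lam}, ((κ x.down.1).ord.ToType)) :=
            (Cardinal.mk_congr (Equiv.piCongrLeft
              (fun j : {j : Fin (n+1) // κ j < lam} => ((κ j.1).ord.ToType)) Equiv.ulift)).symm
        _ = Cardinal.prod
              (fun x : ULift.{u} {j : Fin (n+1) // κ j < lam} => #((κ x.down.1).ord.ToType)) :=
            Cardinal.mk_pi _
        _ < lam := EscapeAux.prod_lt_of_isRegular hlam _
            (fun x => by rw [EscapeAux.mk_toType_eq]; exact x.down.2)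
    set a : lam.ord.ToType → (∀ i, (κ i).ord.ToType) :=
      fun α => UU ⟨E α, hEmem α⟩ with ha
    set F : lam.ord.ToType → (∀ j : {j : Fin (n+1) // κ j < lam}, ((κ j.1).ord.ToType)) :=
      fun α j => a α j.1 with hF
    obtain ⟨astar, hS⟩ := EscapeAux.exists_big_fiber hlam
      (le_of_eq (EscapeAux.mk_toType_eq lam).symm) hA F
    set S := {α : lam.ord.ToType | F α = astar} with hSdef
    have hbound : ∀ j : Fin (n+1), ∃ bj : (κ j).ord.ToType,
        (¬ κ j < lam) → ∀ s : ↥S, a s.1 j ≤ bj := by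
      intro j
      by_cases hj : κ j < lam
      · exact ⟨(hne j).some, fun h => absurd hj h⟩
      · have hjlam : lam < κ j := lt_of_le_of_ne (not_lt.1 hj) (fun h => hno j h.symm)
        have hcard : #↥S < κ j :=
          lt_of_le_of_lt
            (le_trans (Cardinal.mk_set_le S) (le_of_eq (EscapeAux.mk_toType_eq lam))) hjlam
        obtain ⟨bj, hbj⟩ := EscapeAux.exists_bound (hreg j) hcard (fun s : ↥S => a s.1 j)
        exact ⟨bj, fun _ => hbj⟩
    choose b0 hb0 using hbound
    set b : ∀ j, (κ j).ord.ToType :=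
      fun j => if hj : κ j < lam then astar ⟨j, hj⟩ else b0 j with hb
    have hab : ∀ α ∈ S, a α ≤ b := by
      intro α hα
      rw [Pi.le_def]
      intro j
      by_cases hj : κ j < lam
      · simp only [hb, dif_pos hj]
        have h1 : F α = astar := hα
        exact le_of_eq (congrFun h1 ⟨j, hj⟩)
      · simp only [hb, dif_neg hj]
        exact hb0 j hj ⟨α, hα⟩
    have hVb : ∀ α, (VV b).1 ⊆ E α := by
      intro α
      obtain ⟨α', hα'S, hα'⟩ := EscapeAux.exists_not_le hlam hS α
      exact Set.Subset.trans (key1 ⟨E α', hEmem α'⟩ b (hab α' hα'S))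
        (hEmono α α' (le_of_not_ge hα'))
    exact hEint (Filter.mem_of_superset (VV b).2 (Set.subset_iInter hVb))
  -- Direction A : lam = κ i gives a regular-open escape sequence
  have lemA : (∃ i, κ i = lam) → ∃ U : lam.ord.ToType → Set X,
      IsEscapeSeq p U ∧ ∀ α, U α = interior (closure (U α)) := by
    rintro ⟨i, hi⟩
    subst hi
    set z : ∀ j, (κ j).ord.ToType := fun j => (hne j).some with hz
    choose D hDmem hDclosed hDsub using
      fun β : (κ i).ord.ToType =>
        exists_mem_nhds_isClosed_subset (VV (Function.update z i β)).2
    set a : (κ i).ord.ToType → (∀ j, (κ j).ord.ToType) :=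
      fun β => UU ⟨D β, hDmem β⟩ with ha
    have hA : #(∀ j : {j : Fin (n+1) // κ j < κ i}, ((κ j.1).ord.ToType)) < κ i := by
      haveI : Fintype {j : Fin (n+1) // κ j < κ i} := Fintype.ofFinite _
      calc #(∀ j : {j : Fin (n+1) // κ j < κ i}, ((κ j.1).ord.ToType))
          = #(∀ x : ULift.{u} {j : Fin (n+1) // κ j < κ i}, ((κ x.down.1).ord.ToType)) :=
            (Cardinal.mk_congr (Equiv.piCongrLeft
              (fun j : {j : Fin (n+1) // κ j < κ i} => ((κ j.1).ord.ToType)) Equiv.ulift)).symm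
        _ = Cardinal.prod
              (fun x : ULift.{u} {j : Fin (n+1) // κ j < κ i} => #((κ x.down.1).ord.ToType)) :=
            Cardinal.mk_pi _
        _ < κ i := EscapeAux.prod_lt_of_isRegular hlam _
            (fun x => by rw [EscapeAux.mk_toType_eq]; exact x.down.2)
    set F : (κ i).ord.ToType → (∀ j : {j : Fin (n+1) // κ j < κ i}, ((κ j.1).ord.ToType)) :=
      fun β j => a β j.1 with hF
    obtain ⟨astar, hS⟩ := EscapeAux.exists_big_fiber hlam
      (le_of_eq (EscapeAux.mk_toType_eq (κ i)).symm) hA F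
    set S := {β : (κ i).ord.ToType | F β = astar} with hSdef
    set W : (κ i).ord.ToType → Set X := fun α => ⋂ β ∈ S ∩ Set.Iic α, D β with hW
    have hWmem : ∀ α, W α ∈ nhds p := by
      intro α
      have hcard : #↥(S ∩ Set.Iic α) < κ i :=
        lt_of_le_of_lt (Cardinal.mk_le_mk_of_subset Set.inter_subset_right)
          (EscapeAux.card_Iic_lt hlam α)
      have hbound : ∀ j : Fin (n+1), ∃ bj : (κ j).ord.ToType,
          (¬ κ j < κ i) → ∀ s : ↥(S ∩ Set.Iic α), a s.1 j ≤ bj := by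
        intro j
        by_cases hj : κ j < κ i
        · exact ⟨(hne j).some, fun h => absurd hj h⟩
        · obtain ⟨bj, hbj⟩ := EscapeAux.exists_bound (hreg j)
            (hcard.trans_le (not_lt.1 hj)) (fun s : ↥(S ∩ Set.Iic α) => a s.1 j)
          exact ⟨bj, fun _ => hbj⟩
      choose b0 hb0 using hbound
      set b : ∀ j, (κ j).ord.ToType :=
        fun j => if hj : κ j < κ i then astar ⟨j, hj⟩ else b0 j with hb
      have hab : ∀ s : ↥(S ∩ Set.Iic α), a s.1 ≤ b := by
        intro s
        rw [Pi.le_def]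
        intro j
        by_cases hj : κ j < κ i
        · simp only [hb, dif_pos hj]
          have h1 : F s.1 = astar := s.2.1
          exact le_of_eq (congrFun h1 ⟨j, hj⟩)
        · simp only [hb, dif_neg hj]
          exact hb0 j hj s
      refine Filter.mem_of_superset (VV b).2 ?_
      exact Set.subset_iInter₂ fun β hβ => key1 ⟨D β, hDmem β⟩ b (hab ⟨β, hβ⟩)
    have hWmono : ∀ α α' : (κ i).ord.ToType, α ≤ α' → W α' ⊆ W α := by
      intro α α' h
      exact Set.biInter_subset_biInter_left
        (Set.inter_subset_inter_right S (Set.Iic_subset_Iic.2 h))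
    have hWclosed : ∀ α, IsClosed (W α) :=
      fun α => isClosed_biInter fun β _ => hDclosed β
    have hWint : (⋂ α, W α) ∉ nhds p := by
      intro hmem
      have hub : ∀ β ∈ S, β ≤ (UU ⟨⋂ α, W α, hmem⟩) i := by
        intro β hβ
        have h1 : (⋂ α, W α) ⊆ (VV (Function.update z i β)).1 := by
          refine Set.Subset.trans ?_ (hDsub β)
          refine Set.Subset.trans (Set.iInter_subset W β) ?_
          exact Set.biInter_subset_of_mem ⟨hβ, le_refl β⟩
        have h2 := key2 (Function.update z i β) ⟨⋂ α, W α, hmem⟩ h1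
        have h3 := h2 i
        rwa [Function.update_self] at h3
      obtain ⟨y, hyS, hy⟩ := EscapeAux.exists_not_le hlam hS ((UU ⟨⋂ α, W α, hmem⟩) i)
      exact hy (hub y hyS)
    refine ⟨fun α => interior (closure (interior (W α))), ⟨?_, ?_, ?_⟩, ?_⟩
    · intro α
      have hpmem : p ∈ interior (W α) := mem_interior_iff_mem_nhds.2 (hWmem α)
      have hsub : interior (W α) ⊆ interior (closure (interior (W α))) :=
        interior_maximal subset_closure isOpen_interior
      exact isOpen_interior.mem_nhds (hsub hpmem)
    · intro α α' h
      exact interior_mono (closure_mono (interior_mono (hWmono α α' h)))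
    · intro hmem
      refine hWint (Filter.mem_of_superset hmem (Set.iInter_mono fun α => ?_))
      refine Set.Subset.trans interior_subset ?_
      refine Set.Subset.trans (closure_mono interior_subset) ?_
      exact le_of_eq (hWclosed α).closure_eq
    · intro α
      exact (EscapeAux.interior_closure_interior_closure (interior (W α))).symm
  constructor
  · constructor
    · intro h
      exact lemA (lemB h)
    · rintro ⟨U, hU, -⟩
      exact ⟨U, hU⟩
  · constructor
    · exact lemB
    · intro h
      obtain ⟨U, hU, -⟩ := lemA h
      exact ⟨U, hU⟩
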